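/- Let z ∈ W^{2,2}([a,b];ℝ^{n_p}) satisfy B_c z_b = 0, with B_c B_d invertible, and let x ∈ ℝ^{n₀}. Then |x|² + ‖z‖_{L²}² = ⟨(x, z_ss), 𝒯(x, z_ss)⟩_X, where 𝒯 = 𝒫_{I,0,0,0,G₁,G₂}* ∘ 𝒫_{I,0,0,0,G₁,G₂} and * denotes the adjoint with respect to ⟨·,·⟩_X. -/

import Mathlib

open MeasureTheory Matrix Set

noncomputable section

/-- The operator `𝒫_{P,Q₁,Q₂,S,R₁,R₂}` on `ℝ^m × L²([a,b];ℝⁿ)`, applied to a pair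
`u = (x, z)`.  All integrals are taken entrywise. -/
def Pop (a b : ℝ) {m n : ℕ}
    (P : Matrix (Fin m) (Fin m) ℝ)
    (Q1 : ℝ → Matrix (Fin m) (Fin n) ℝ)
    (Q2 : ℝ → Matrix (Fin n) (Fin m) ℝ)
    (S : ℝ → Matrix (Fin n) (Fin n) ℝ)
    (R1 R2 : ℝ → ℝ → Matrix (Fin n) (Fin n) ℝ)
    (u : (Fin m → ℝ) × (ℝ → Fin n → ℝ)) :
    (Fin m → ℝ) × (ℝ → Fin n → ℝ) :=
  (P.mulVec u.1 + (fun i => ∫ s in a..b, (Q1 s).mulVec (u.2 s) i),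
   fun s => (Q2 s).mulVec u.1 + (S s).mulVec (u.2 s)
     + (fun i => ∫ η in a..s, (R1 s η).mulVec (u.2 η) i)
     + (fun i => ∫ η in s..b, (R2 s η).mulVec (u.2 η) i))

/-- The inner product on `X = ℝ^m × L²([a,b];ℝⁿ)`:
`⟨(x₁,x₂),(z₁,z₂)⟩_X = x₁ᵀz₁ + ∫ₐᵇ x₂(s)ᵀ z₂(s) ds`. -/
def innerX (a b : ℝ) {m n : ℕ}
    (u v : (Fin m → ℝ) × (ℝ → Fin n → ℝ)) : ℝ :=
  u.1 ⬝ᵥ v.1 + ∫ s in a..b, u.2 s ⬝ᵥ v.2 s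

/-- `z ∈ L²([a,b];ℝⁿ)`. -/
def MemL2 (a b : ℝ) {n : ℕ} (z : ℝ → Fin n → ℝ) : Prop :=
  MemLp z 2 (volume.restrict (Icc a b))

/-- A bounded measurable matrix-valued function on `[a,b]`. -/
def BddMeas (a b : ℝ) {k l : ℕ} (F : ℝ → Matrix (Fin k) (Fin l) ℝ) : Prop :=
  (∀ i j, Measurable fun s => F s i j) ∧
    ∃ C, ∀ s ∈ Icc a b, ∀ i j, |F s i j| ≤ C

/-- A bounded measurable matrix-valued kernel on `[a,b] × [a,b]`. -/
def BddMeas2 (a b : ℝ) {k l : ℕ} (F : ℝ → ℝ → Matrix (Fin k) (Fin l) ℝ) : Prop :=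
  (∀ i j, Measurable fun p : ℝ × ℝ => F p.1 p.2 i j) ∧
    ∃ C, ∀ s ∈ Icc a b, ∀ η ∈ Icc a b, ∀ i j, |F s η i j| ≤ C

/-- Entrywise integral of a matrix-valued function. -/
def mInt {k l : ℕ} (c d : ℝ) (F : ℝ → Matrix (Fin k) (Fin l) ℝ) :
    Matrix (Fin k) (Fin l) ℝ :=
  Matrix.of fun i j => ∫ t in c..d, F t i j

/-- The block matrix `B_d ∈ ℝ^{4n_p × 2n_p}` with block rows
`[I, 0]`, `[I, (b−a)I]`, `[0, I]`, `[0, I]`. -/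
def Bdm (a b : ℝ) (np : ℕ) : Matrix (Fin 4 × Fin np) (Fin 2 × Fin np) ℝ :=
  Matrix.of fun p q =>
    (![![(1 : Matrix (Fin np) (Fin np) ℝ), 0],
       ![1, (b - a) • 1],
       ![0, 1],
       ![0, 1]] p.1 q.1) p.2 q.2

/-- The block column `col(0, (b−η)I, 0, I) ∈ ℝ^{4n_p × n_p}`. -/
def colE (b : ℝ) (np : ℕ) (η : ℝ) : Matrix (Fin 4 × Fin np) (Fin np) ℝ :=
  Matrix.of fun p j =>
    (![(0 : Matrix (Fin np) (Fin np) ℝ), (b - η) • 1, 0, 1] p.1) p.2 j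

/-- `B_f(η) = (B_c B_d)⁻¹ B_c col(0,(b−η)I,0,I)`. -/
def Bfm (a b : ℝ) {np : ℕ}
    (Bc : Matrix (Fin 2 × Fin np) (Fin 4 × Fin np) ℝ) (η : ℝ) :
    Matrix (Fin 2 × Fin np) (Fin np) ℝ :=
  (Bc * Bdm a b np)⁻¹ * Bc * colE b np η

/-- The block row `[I, (s−a)I] ∈ ℝ^{n_p × 2n_p}`. -/
def rowIA (a : ℝ) (np : ℕ) (s : ℝ) : Matrix (Fin np) (Fin 2 × Fin np) ℝ :=
  Matrix.of fun i q => (![(1 : Matrix (Fin np) (Fin np) ℝ), (s - a) • 1] q.1) i q.2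

/-- The block row `[0, I] ∈ ℝ^{n_p × 2n_p}`. -/
def rowZI (np : ℕ) : Matrix (Fin np) (Fin 2 × Fin np) ℝ :=
  Matrix.of fun i q => (![(0 : Matrix (Fin np) (Fin np) ℝ), 1] q.1) i q.2

/-- `B_a(s,η) = −[I,(s−a)I] B_f(η)`. -/
def Bam (a b : ℝ) {np : ℕ}
    (Bc : Matrix (Fin 2 × Fin np) (Fin 4 × Fin np) ℝ) (s η : ℝ) :
    Matrix (Fin np) (Fin np) ℝ :=
  -(rowIA a np s * Bfm a b Bc η)

/-- `B_b(η) = −[0,I] B_f(η)`. -/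
def Bbm (a b : ℝ) {np : ℕ}
    (Bc : Matrix (Fin 2 × Fin np) (Fin 4 × Fin np) ℝ) (η : ℝ) :
    Matrix (Fin np) (Fin np) ℝ :=
  -(rowZI np * Bfm a b Bc η)

/-- `G₁(s,η) = B_a(s,η) + (s−η)I`. -/
def G1m (a b : ℝ) {np : ℕ}
    (Bc : Matrix (Fin 2 × Fin np) (Fin 4 × Fin np) ℝ) (s η : ℝ) :
    Matrix (Fin np) (Fin np) ℝ :=
  Bam a b Bc s η + (s - η) • 1

/-- `G₂(s,η) = B_a(s,η)`. -/
def G2m (a b : ℝ) {np : ℕ}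
    (Bc : Matrix (Fin 2 × Fin np) (Fin 4 × Fin np) ℝ) (s η : ℝ) :
    Matrix (Fin np) (Fin np) ℝ :=
  Bam a b Bc s η

/-- `G₃(s,η) = B_b(η) + I`. -/
def G3m (a b : ℝ) {np : ℕ}
    (Bc : Matrix (Fin 2 × Fin np) (Fin 4 × Fin np) ℝ) (_s η : ℝ) :
    Matrix (Fin np) (Fin np) ℝ :=
  Bbm a b Bc η + 1

/-- `G₄(s,η) = B_b(η)`. -/
def G4m (a b : ℝ) {np : ℕ}
    (Bc : Matrix (Fin 2 × Fin np) (Fin 4 × Fin np) ℝ) (_s η : ℝ) :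
    Matrix (Fin np) (Fin np) ℝ :=
  Bbm a b Bc η

/-- The boundary vector `z_b = col(z(a), z(b), z_s(a), z_s(b)) ∈ ℝ^{4n_p}`. -/
def zbv (a b : ℝ) {np : ℕ} (z zs : ℝ → Fin np → ℝ) : Fin 4 × Fin np → ℝ :=
  fun p => ![z a, z b, zs a, zs b] p.1 p.2
/-- The operator `𝒯 = 𝒫_{I,0,0,0,G₁,G₂}* ∘ 𝒫_{I,0,0,0,G₁,G₂}`, applied to `u`;
the adjoint `𝒫_{I,0,0,0,G₁,G₂}*` equals `𝒫_{I,0,0,0,G₂(η,s)ᵀ,G₁(η,s)ᵀ}`. -/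
def Tapply (a b : ℝ) {n0 np : ℕ}
    (Bc : Matrix (Fin 2 × Fin np) (Fin 4 × Fin np) ℝ)
    (u : (Fin n0 → ℝ) × (ℝ → Fin np → ℝ)) :
    (Fin n0 → ℝ) × (ℝ → Fin np → ℝ) :=
  Pop a b 1 (fun _ => 0) (fun _ => 0) (fun _ => 0)
    (fun s η => (G2m a b Bc η s)ᵀ) (fun s η => (G1m a b Bc η s)ᵀ)
    (Pop a b 1 (fun _ => 0) (fun _ => 0) (fun _ => 0) (G1m a b Bc) (G2m a b Bc) u)


/-! ### Auxiliary lemmas -/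

section Aux
open intervalIntegral

lemma ftc_aux {a b : ℝ} {f f' : ℝ → ℝ}
    (hf : ∀ t ∈ Icc a b, HasDerivWithinAt f (f' t) (Icc a b) t)
    (hint : IntegrableOn f' (Icc a b) volume) {s : ℝ} (hs : s ∈ Icc a b) :
    ∫ t in a..s, f' t = f s - f a := by
  apply intervalIntegral.integral_eq_sub_of_hasDeriv_right_of_le hs.1
  · exact fun t ht => ((hf t (Icc_subset_Icc_right hs.2 ht)).continuousWithinAt).mono
      (Icc_subset_Icc_right hs.2)
  · intro t ht
    exact ((hf t ⟨ht.1.le, le_trans ht.2.le hs.2⟩).mono_of_mem_nhdsWithin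
      (mem_nhdsWithin_of_mem_nhds (Icc_mem_nhds ht.1 (lt_of_lt_of_le ht.2 hs.2))))
  · rw [intervalIntegrable_iff_integrableOn_Ioc_of_le hs.1]
    exact hint.mono_set (Ioc_subset_Icc_self.trans (Icc_subset_Icc_right hs.2))

lemma comp_integrable {n : ℕ} {f : ℝ → Fin n → ℝ} {s : Set ℝ}
    (hf : IntegrableOn f s volume) (i : Fin n) : IntegrableOn (fun t => f t i) s volume :=
  (ContinuousLinearMap.proj (R := ℝ) (φ := fun _ : Fin n => ℝ) i).integrable_comp hf

lemma intOn_mulVec {k l : Type*} [Fintype k] [Fintype l] {c d : ℝ}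
    {M : ℝ → Matrix k l ℝ} {f : ℝ → l → ℝ}
    {S : Set ℝ} (hS : MeasurableSet S) (hSsub : S ⊆ Icc c d)
    (hM : ∀ i j, Continuous fun t => M t i j)
    (hf : ∀ j, IntegrableOn (fun t => f t j) S volume) (i : k) :
    IntegrableOn (fun t => (M t).mulVec (f t) i) S volume := by
  have h : (fun t => (M t).mulVec (f t) i) = fun t => ∑ j, M t i j * f t j := by
    funext t; simp [Matrix.mulVec, dotProduct]
  rw [h]
  apply integrable_finset_sum
  intro j _
  obtain ⟨C, hC⟩ := (isCompact_Icc (a := c) (b := d)).exists_bound_of_continuousOn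
    ((hM i j).continuousOn)
  exact Integrable.bdd_mul (hf j) (hM i j).aestronglyMeasurable
    ((ae_restrict_iff' hS).2 (Filter.Eventually.of_forall fun t ht => hC t (hSsub ht)))

lemma mulVec_intInt {k l : Type*} [Fintype k] [Fintype l] (M : Matrix k l ℝ) {f : ℝ → l → ℝ} {c d : ℝ}
    (hf : ∀ j, IntervalIntegrable (fun t => f t j) volume c d) (i : k) :
    M.mulVec (fun j => ∫ t in c..d, f t j) i = ∫ t in c..d, M.mulVec (f t) i := by
  simp only [Matrix.mulVec, dotProduct]
  rw [intervalIntegral.integral_finset_sum (fun j _ => (hf j).const_mul (M i j))]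
  simp [intervalIntegral.integral_const_mul]

section Cont
variable {np : ℕ} (a b : ℝ) (Bc : Matrix (Fin 2 × Fin np) (Fin 4 × Fin np) ℝ)

lemma cont_colE (p : Fin 4 × Fin np) (j : Fin np) :
    Continuous fun η => colE b np η p j := by
  rcases p with ⟨p1, i⟩
  fin_cases p1 <;> simp [colE, Matrix.smul_apply, Matrix.one_apply, smul_eq_mul] <;>
    (try split_ifs) <;> fun_prop

lemma cont_Bfm (q : Fin 2 × Fin np) (j : Fin np) :
    Continuous fun η => Bfm a b Bc η q j := by
  have h : ∀ η, Bfm a b Bc η q j = ∑ p, ((Bc * Bdm a b np)⁻¹ * Bc) q p * colE b np η p j := by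
    intro η; rw [Bfm, Matrix.mul_apply]
  simp only [h]
  exact continuous_finset_sum _ fun p _ => continuous_const.mul (cont_colE b p j)

lemma cont_rowIA (i : Fin np) (q : Fin 2 × Fin np) :
    Continuous fun s => rowIA a np s i q := by
  rcases q with ⟨q1, q2⟩
  fin_cases q1 <;> simp [rowIA, Matrix.smul_apply, Matrix.one_apply, smul_eq_mul] <;>
    (try split_ifs) <;> fun_prop

lemma cont_Bam (i j : Fin np) :
    Continuous fun p : ℝ × ℝ => Bam a b Bc p.1 p.2 i j := by
  have h : ∀ p : ℝ × ℝ, Bam a b Bc p.1 p.2 i j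
      = -∑ q, rowIA a np p.1 i q * Bfm a b Bc p.2 q j := by
    intro p; rw [Bam, Matrix.neg_apply, Matrix.mul_apply]
  simp only [h]
  exact (continuous_finset_sum _ fun q _ =>
    ((cont_rowIA a i q).comp continuous_fst).mul ((cont_Bfm a b Bc q j).comp continuous_snd)).neg

lemma cont_G1m (i j : Fin np) :
    Continuous fun p : ℝ × ℝ => G1m a b Bc p.1 p.2 i j := by
  have h : ∀ p : ℝ × ℝ, G1m a b Bc p.1 p.2 i j
      = Bam a b Bc p.1 p.2 i j + (p.1 - p.2) * (1 : Matrix (Fin np) (Fin np) ℝ) i j := by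
    intro p; rw [G1m, Matrix.add_apply, Matrix.smul_apply, smul_eq_mul]
  simp only [h]
  exact (cont_Bam a b Bc i j).add ((continuous_fst.sub continuous_snd).mul continuous_const)

lemma cont_G2m (i j : Fin np) :
    Continuous fun p : ℝ × ℝ => G2m a b Bc p.1 p.2 i j := cont_Bam a b Bc i j

lemma cont_snd_of_cont {F : ℝ → ℝ → ℝ} (hF : Continuous fun p : ℝ × ℝ => F p.1 p.2) (s : ℝ) :
    Continuous fun t => F s t := hF.comp (continuous_const.prodMk continuous_id)

lemma cont_fst_of_cont {F : ℝ → ℝ → ℝ} (hF : Continuous fun p : ℝ × ℝ => F p.1 p.2) (t : ℝ) :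
    Continuous fun s => F s t := hF.comp (continuous_id.prodMk continuous_const)

end Cont

def vab {np : ℕ} (a : ℝ) (z zs : ℝ → Fin np → ℝ) : Fin 2 × Fin np → ℝ :=
  fun q => ![z a, zs a] q.1 q.2

section Main
variable {np : ℕ} {a b : ℝ} {Bc : Matrix (Fin 2 × Fin np) (Fin 4 × Fin np) ℝ}
  {z zs zss : ℝ → Fin np → ℝ}

lemma taylor1' (hzs : ∀ s ∈ Icc a b, HasDerivWithinAt zs (zss s) (Icc a b) s)
    (hint : IntegrableOn zss (Icc a b) volume) {s : ℝ} (hs : s ∈ Icc a b) (i : Fin np) :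
    ∫ η in a..s, zss η i = zs s i - zs a i :=
  ftc_aux (fun t ht => (hasDerivWithinAt_pi.mp (hzs t ht)) i) (comp_integrable hint i) hs

lemma taylor2' (hz : ∀ s ∈ Icc a b, HasDerivWithinAt z (zs s) (Icc a b) s)
    (hzs : ∀ s ∈ Icc a b, HasDerivWithinAt zs (zss s) (Icc a b) s)
    (hint : IntegrableOn zss (Icc a b) volume) {s : ℝ} (hs : s ∈ Icc a b) (i : Fin np) :
    ∫ η in a..s, (s - η) * zss η i = z s i - z a i - (s - a) * zs a i := by
  have key : ∫ η in a..s, (s - η) * zss η i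
      = (z s i + (s - s) * zs s i) - (z a i + (s - a) * zs a i) := by
    apply ftc_aux (f := fun η => z η i + (s - η) * zs η i) ?_ ?_ hs
    · intro t ht
      have h1 := (hasDerivWithinAt_pi.mp (hz t ht)) i
      have h2 := (hasDerivWithinAt_pi.mp (hzs t ht)) i
      have h3 : HasDerivWithinAt (fun η : ℝ => s - η) (-1) (Icc a b) t :=
        (hasDerivWithinAt_id t _).const_sub s
      have h4 := h1.add (h3.mul h2)
      refine h4.congr_deriv ?_
      ring
    · apply Integrable.bdd_mul (c := |s| + max |a| |b|) (comp_integrable hint i)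
        (Continuous.aestronglyMeasurable (by continuity))
      rw [ae_restrict_iff' measurableSet_Icc]
      refine Filter.Eventually.of_forall fun t ht => ?_
      have h5 : |t| ≤ max |a| |b| := abs_le_max_abs_abs ht.1 ht.2
      calc ‖s - t‖ = |s - t| := rfl
        _ ≤ |s| + |t| := abs_sub _ _
        _ ≤ |s| + max |a| |b| := by linarith
  rw [key]; ring

lemma zbv_decomp (hab : a ≤ b)
    (hz : ∀ s ∈ Icc a b, HasDerivWithinAt z (zs s) (Icc a b) s)
    (hzs : ∀ s ∈ Icc a b, HasDerivWithinAt zs (zss s) (Icc a b) s)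
    (hint : IntegrableOn zss (Icc a b) volume) (p : Fin 4 × Fin np) :
    zbv a b z zs p = (Bdm a b np).mulVec (vab a z zs) p
      + ∫ η in a..b, (colE b np η).mulVec (zss η) p := by
  obtain ⟨p1, i⟩ := p
  have hb : b ∈ Icc a b := ⟨hab, le_refl b⟩
  have t1 := taylor1' hzs hint hb i
  have t2 := taylor2' hz hzs hint hb i
  fin_cases p1 <;>
    simp [zbv, vab, Bdm, colE, Matrix.mulVec, dotProduct, Fintype.sum_prod_type,
      Fin.sum_univ_two, Matrix.one_apply, Matrix.smul_apply, smul_eq_mul, ite_mul, mul_ite,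
      Matrix.cons_val_zero, Matrix.cons_val_one, Matrix.head_cons, Matrix.vecHead, Matrix.vecTail,
      Function.comp, Matrix.cons_val_fin_one, Matrix.zero_apply]
  · rw [t2] at *; linarith [t2]
  · rw [t1]; ring

lemma intInt_colE_mulVec (hab : a ≤ b) (hint : IntegrableOn zss (Icc a b) volume)
    (p : Fin 4 × Fin np) :
    IntervalIntegrable (fun η => (colE b np η).mulVec (zss η) p) volume a b := by
  rw [intervalIntegrable_iff_integrableOn_Ioc_of_le hab]
  exact intOn_mulVec (c := a) (d := b) measurableSet_Ioc Ioc_subset_Icc_self (cont_colE b)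
    (fun j => (comp_integrable hint j).mono_set Ioc_subset_Icc_self) p

lemma vab_eq (hab : a ≤ b) (hdet : IsUnit (Bc * Bdm a b np).det)
    (hz : ∀ s ∈ Icc a b, HasDerivWithinAt z (zs s) (Icc a b) s)
    (hzs : ∀ s ∈ Icc a b, HasDerivWithinAt zs (zss s) (Icc a b) s)
    (hint : IntegrableOn zss (Icc a b) volume)
    (hbc : Bc.mulVec (zbv a b z zs) = 0) :
    vab a z zs = fun q => -∫ η in a..b, (Bfm a b Bc η).mulVec (zss η) q := by
  set I : Fin 4 × Fin np → ℝ := fun p => ∫ η in a..b, (colE b np η).mulVec (zss η) p with hI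
  have hdc : zbv a b z zs = (Bdm a b np).mulVec (vab a z zs) + I :=
    funext (zbv_decomp hab hz hzs hint)
  have h0 : (Bc * Bdm a b np).mulVec (vab a z zs) = -(Bc.mulVec I) := by
    have := congrArg Bc.mulVec hdc
    rw [hbc, Matrix.mulVec_add, Matrix.mulVec_mulVec] at this
    linear_combination (norm := module) -this
  have h1 : vab a z zs = -(((Bc * Bdm a b np)⁻¹ * Bc).mulVec I) := by
    have h2 : vab a z zs
        = ((Bc * Bdm a b np)⁻¹ * (Bc * Bdm a b np)).mulVec (vab a z zs) := by
      rw [Matrix.nonsing_inv_mul _ hdet, Matrix.one_mulVec]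
    rw [h2, ← Matrix.mulVec_mulVec, h0, Matrix.mulVec_neg, Matrix.mulVec_mulVec]
  rw [h1]
  funext q
  simp only [Pi.neg_apply, neg_inj]
  rw [hI, mulVec_intInt _ (intInt_colE_mulVec hab hint) q]
  congr 1; funext η
  rw [Matrix.mulVec_mulVec]; rfl

lemma rowIA_mulVec_vab (s : ℝ) (i : Fin np) :
    (rowIA a np s).mulVec (vab a z zs) i = z a i + (s - a) * zs a i := by
  simp [rowIA, vab, Matrix.mulVec, dotProduct, Fintype.sum_prod_type,
    Fin.sum_univ_two, Matrix.one_apply, Matrix.smul_apply, smul_eq_mul, ite_mul, mul_ite,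
    Matrix.cons_val_zero, Matrix.cons_val_one, Matrix.head_cons]

lemma intInt_mulVec {k : Type*} [Fintype k] {c d : ℝ} (hac : a ≤ c) (hcd : c ≤ d) (hdb : d ≤ b)
    {M : ℝ → Matrix k (Fin np) ℝ} (hM : ∀ i j, Continuous fun t => M t i j)
    (hint : IntegrableOn zss (Icc a b) volume) (i : k) :
    IntervalIntegrable (fun η => (M η).mulVec (zss η) i) volume c d := by
  rw [intervalIntegrable_iff_integrableOn_Ioc_of_le hcd]
  have hsub : Ioc c d ⊆ Icc a b := fun t ht => ⟨hac.trans ht.1.le, ht.2.trans hdb⟩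
  exact intOn_mulVec (c := a) (d := b) measurableSet_Ioc hsub hM
    (fun j => (comp_integrable hint j).mono_set hsub) i

lemma intInt_scalar {c d s : ℝ} (hac : a ≤ c) (hcd : c ≤ d) (hdb : d ≤ b)
    (hint : IntegrableOn zss (Icc a b) volume) (i : Fin np) :
    IntervalIntegrable (fun η => (s - η) * zss η i) volume c d := by
  rw [intervalIntegrable_iff_integrableOn_Ioc_of_le hcd]
  have hsub : Ioc c d ⊆ Icc a b := fun t ht => ⟨hac.trans ht.1.le, ht.2.trans hdb⟩
  apply Integrable.bdd_mul (c := |s| + max |a| |b|)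
    ((comp_integrable hint i).mono_set hsub)
    (Continuous.aestronglyMeasurable (by continuity))
  rw [ae_restrict_iff' measurableSet_Ioc]
  refine Filter.Eventually.of_forall fun t ht => ?_
  have h5 : |t| ≤ max |a| |b| := abs_le_max_abs_abs (hsub ht).1 (hsub ht).2
  calc ‖s - t‖ = |s - t| := rfl
    _ ≤ |s| + |t| := abs_sub _ _
    _ ≤ |s| + max |a| |b| := by linarith

lemma repr_z (hab : a ≤ b) (hdet : IsUnit (Bc * Bdm a b np).det)
    (hz : ∀ s ∈ Icc a b, HasDerivWithinAt z (zs s) (Icc a b) s)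
    (hzs : ∀ s ∈ Icc a b, HasDerivWithinAt zs (zss s) (Icc a b) s)
    (hint : IntegrableOn zss (Icc a b) volume)
    (hbc : Bc.mulVec (zbv a b z zs) = 0) {s : ℝ} (hs : s ∈ Icc a b) (i : Fin np) :
    (∫ η in a..s, (G1m a b Bc s η).mulVec (zss η) i)
      + (∫ η in s..b, (G2m a b Bc s η).mulVec (zss η) i) = z s i := by
  have contBam : ∀ i j, Continuous fun η => Bam a b Bc s η i j :=
    fun i j => cont_snd_of_cont (F := fun s η => Bam a b Bc s η i j) (cont_Bam a b Bc i j) s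
  have hA1 : IntervalIntegrable (fun η => (Bam a b Bc s η).mulVec (zss η) i) volume a s :=
    intInt_mulVec le_rfl hs.1 hs.2 contBam hint i
  have hA2 : IntervalIntegrable (fun η => (Bam a b Bc s η).mulVec (zss η) i) volume s b :=
    intInt_mulVec hs.1 hs.2 le_rfl contBam hint i
  have hS1 : IntervalIntegrable (fun η => (s - η) * zss η i) volume a s :=
    intInt_scalar le_rfl hs.1 hs.2 hint i
  have e1 : ∀ η, (G1m a b Bc s η).mulVec (zss η) i
      = (Bam a b Bc s η).mulVec (zss η) i + (s - η) * zss η i := by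
    intro η
    rw [G1m, Matrix.add_mulVec, Matrix.smul_mulVec, Matrix.one_mulVec]
    simp [smul_eq_mul]
  have split1 : (∫ η in a..s, (G1m a b Bc s η).mulVec (zss η) i)
      = (∫ η in a..s, (Bam a b Bc s η).mulVec (zss η) i) + ∫ η in a..s, (s - η) * zss η i := by
    simp only [e1]
    exact intervalIntegral.integral_add hA1 hS1
  have adj : (∫ η in a..s, (Bam a b Bc s η).mulVec (zss η) i)
      + (∫ η in s..b, (Bam a b Bc s η).mulVec (zss η) i)
      = ∫ η in a..b, (Bam a b Bc s η).mulVec (zss η) i :=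
    intervalIntegral.integral_add_adjacent_intervals hA1 hA2
  have hBfInt : ∀ q, IntervalIntegrable (fun η => (Bfm a b Bc η).mulVec (zss η) q) volume a b :=
    fun q => intInt_mulVec le_rfl hab le_rfl (cont_Bfm a b Bc) hint q
  have full : (∫ η in a..b, (Bam a b Bc s η).mulVec (zss η) i)
      = z a i + (s - a) * zs a i := by
    have e2 : ∀ η, (Bam a b Bc s η).mulVec (zss η) i
        = -((rowIA a np s).mulVec ((Bfm a b Bc η).mulVec (zss η)) i) := by
      intro η
      rw [Matrix.mulVec_mulVec, Bam, Matrix.neg_mulVec]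
      rfl
    simp only [e2]
    rw [intervalIntegral.integral_neg]
    have e3 : (∫ η in a..b, (rowIA a np s).mulVec ((Bfm a b Bc η).mulVec (zss η)) i)
        = (rowIA a np s).mulVec (fun q => ∫ η in a..b, (Bfm a b Bc η).mulVec (zss η) q) i :=
      (mulVec_intInt _ hBfInt i).symm
    rw [e3]
    have e4 : (fun q => ∫ η in a..b, (Bfm a b Bc η).mulVec (zss η) q) = -vab a z zs := by
      rw [vab_eq hab hdet hz hzs hint hbc]
      funext q; simp
    rw [e4, Matrix.mulVec_neg, Pi.neg_apply, neg_neg, rowIA_mulVec_vab]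
  rw [split1, taylor2' hz hzs hint hs i]
  simp only [G2m]
  linarith [adj, full]

end Main

lemma dot_intInt {l : Type*} [Fintype l] (v : l → ℝ) {f : ℝ → l → ℝ} {c d : ℝ}
    (hf : ∀ i, IntervalIntegrable (fun t => f t i) volume c d) :
    v ⬝ᵥ (fun i => ∫ t in c..d, f t i) = ∫ t in c..d, v ⬝ᵥ f t := by
  simp only [dotProduct]
  rw [intervalIntegral.integral_finset_sum (fun i _ => (hf i).const_mul (v i))]
  simp [intervalIntegral.integral_const_mul]

lemma dot_trans {np : ℕ} (M : Matrix (Fin np) (Fin np) ℝ) (v w : Fin np → ℝ) :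
    v ⬝ᵥ (Mᵀ.mulVec w) = M.mulVec v ⬝ᵥ w := by
  rw [Matrix.dotProduct_mulVec, Matrix.vecMul_transpose]


lemma triangle_swap {a b : ℝ} (hab : a ≤ b) {A B : ℝ → ℝ → ℝ}
    (hA : Integrable (fun p : ℝ × ℝ => A p.1 p.2)
      ((volume.restrict (Ioc a b)).prod (volume.restrict (Ioc a b))))
    (hB : Integrable (fun p : ℝ × ℝ => B p.1 p.2)
      ((volume.restrict (Ioc a b)).prod (volume.restrict (Ioc a b))))
    (hAs : ∀ s ∈ Ioc a b, IntegrableOn (fun η => A s η) (Ioc a b) volume)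
    (hBs : ∀ s ∈ Ioc a b, IntegrableOn (fun η => B s η) (Ioc a b) volume)
    (hAe : ∀ η ∈ Ioc a b, IntegrableOn (fun s => A s η) (Ioc a b) volume)
    (hBe : ∀ η ∈ Ioc a b, IntegrableOn (fun s => B s η) (Ioc a b) volume) :
    ∫ s in a..b, ((∫ η in a..s, A s η) + ∫ η in s..b, B s η)
      = ∫ s in a..b, ((∫ η in a..s, B η s) + ∫ η in s..b, A η s) := by
  have hT : MeasurableSet {p : ℝ × ℝ | p.2 ≤ p.1} :=
    (isClosed_le continuous_snd continuous_fst).measurableSet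
  have hTc : MeasurableSet {p : ℝ × ℝ | p.1 < p.2} :=
    (isOpen_lt continuous_fst continuous_snd).measurableSet
  set K : ℝ × ℝ → ℝ := fun p =>
    {p : ℝ × ℝ | p.2 ≤ p.1}.indicator (fun p => A p.1 p.2) p
      + {p : ℝ × ℝ | p.1 < p.2}.indicator (fun p => B p.1 p.2) p with hK
  have hKint : Integrable K ((volume.restrict (Ioc a b)).prod (volume.restrict (Ioc a b))) :=
    (hA.indicator hT).add (hB.indicator hTc)
  have step1 : ∫ s in a..b, ((∫ η in a..s, A s η) + ∫ η in s..b, B s η)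
      = ∫ s in Ioc a b, ∫ η in Ioc a b, K (s, η) := by
    rw [intervalIntegral.integral_of_le hab]
    apply setIntegral_congr_fun measurableSet_Ioc
    intro s hs
    show (∫ η in a..s, A s η) + ∫ η in s..b, B s η = ∫ η in Ioc a b, K (s, η)
    have e1 : (fun η => K (s, η))
        = fun η => (Iic s).indicator (fun η => A s η) η + (Ioi s).indicator (fun η => B s η) η := by
      funext η
      simp only [hK, indicator, mem_setOf_eq, mem_Iic, mem_Ioi]
    rw [e1, integral_add (((hAs s hs).indicator measurableSet_Iic))
      (((hBs s hs).indicator measurableSet_Ioi)),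
      setIntegral_indicator measurableSet_Iic, setIntegral_indicator measurableSet_Ioi]
    have e2 : Ioc a b ∩ Iic s = Ioc a s := by
      rw [Ioc_inter_Iic, min_eq_right hs.2]
    have e3 : Ioc a b ∩ Ioi s = Ioc s b := by
      ext t; simp only [mem_inter_iff, mem_Ioc, mem_Ioi]
      constructor
      · rintro ⟨⟨_, h2⟩, h3⟩; exact ⟨h3, h2⟩
      · rintro ⟨h1, h2⟩; exact ⟨⟨hs.1.trans h1, h2⟩, h1⟩
    rw [e2, e3, intervalIntegral.integral_of_le hs.1.le, intervalIntegral.integral_of_le hs.2]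
  have step2 : ∫ s in Ioc a b, ∫ η in Ioc a b, K (s, η)
      = ∫ η in Ioc a b, ∫ s in Ioc a b, K (s, η) :=
    integral_integral_swap hKint
  have step3 : ∫ η in Ioc a b, ∫ s in Ioc a b, K (s, η)
      = ∫ s in a..b, ((∫ η in a..s, B η s) + ∫ η in s..b, A η s) := by
    rw [intervalIntegral.integral_of_le hab]
    apply setIntegral_congr_fun measurableSet_Ioc
    intro η hη
    show (∫ s in Ioc a b, K (s, η)) = (∫ s in a..η, B s η) + ∫ s in η..b, A s η
    have e1 : (fun s => K (s, η))
        = fun s => (Ici η).indicator (fun s => A s η) s + (Iio η).indicator (fun s => B s η) s := by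
      funext s
      simp only [hK, indicator, mem_setOf_eq, mem_Ici, mem_Iio]
    rw [e1, integral_add (((hAe η hη).indicator measurableSet_Ici))
      (((hBe η hη).indicator measurableSet_Iio)),
      setIntegral_indicator measurableSet_Ici, setIntegral_indicator measurableSet_Iio]
    have e2 : Ioc a b ∩ Ici η = Icc η b := by
      ext t; simp only [mem_inter_iff, mem_Ioc, mem_Ici, mem_Icc]
      constructor
      · rintro ⟨⟨_, h2⟩, h3⟩; exact ⟨h3, h2⟩
      · rintro ⟨h1, h2⟩; exact ⟨⟨hη.1.trans_le h1, h2⟩, h1⟩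
    have e3 : Ioc a b ∩ Iio η = Ioo a η := by
      ext t; simp only [mem_inter_iff, mem_Ioc, mem_Iio, mem_Ioo]
      constructor
      · rintro ⟨⟨h1, _⟩, h3⟩; exact ⟨h1, h3⟩
      · rintro ⟨h1, h2⟩; exact ⟨⟨h1, (h2.le.trans hη.2)⟩, h2⟩
    rw [e2, e3, integral_Icc_eq_integral_Ioc, ← integral_Ioc_eq_integral_Ioo,
      ← intervalIntegral.integral_of_le hη.2, ← intervalIntegral.integral_of_le hη.1.le]
    rw [add_comm]
  rw [step1, step2, step3]

section Main2
variable {np : ℕ} {a b : ℝ} {Bc : Matrix (Fin 2 × Fin np) (Fin 4 × Fin np) ℝ}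
  {z zss : ℝ → Fin np → ℝ}

lemma kernel_prod_integrable {Gf : ℝ → ℝ → Matrix (Fin np) (Fin np) ℝ}
    (hG : ∀ i j, Continuous fun p : ℝ × ℝ => Gf p.1 p.2 i j)
    (hint : IntegrableOn zss (Icc a b) volume)
    (hzc : ∀ i, ContinuousOn (fun t => z t i) (Icc a b)) :
    Integrable (fun p : ℝ × ℝ => (Gf p.2 p.1).mulVec (zss p.1) ⬝ᵥ z p.2)
      ((volume.restrict (Ioc a b)).prod (volume.restrict (Ioc a b))) := by
  have he : (fun p : ℝ × ℝ => (Gf p.2 p.1).mulVec (zss p.1) ⬝ᵥ z p.2)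
      = fun p => ∑ i, ∑ j, Gf p.2 p.1 i j * (zss p.1 j * z p.2 i) := by
    funext p
    simp [Matrix.mulVec, dotProduct, Finset.sum_mul, mul_assoc]
  rw [he]
  apply integrable_finset_sum; intro i _
  apply integrable_finset_sum; intro j _
  have hc : Continuous fun p : ℝ × ℝ => Gf p.2 p.1 i j :=
    (hG i j).comp (continuous_snd.prodMk continuous_fst)
  obtain ⟨C, hC⟩ := (((isCompact_Icc (a := a) (b := b)).prod
    (isCompact_Icc (a := a) (b := b)))).exists_bound_of_continuousOn hc.continuousOn
  have hbase : Integrable (fun p : ℝ × ℝ => zss p.1 j * z p.2 i)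
      ((volume.restrict (Ioc a b)).prod (volume.restrict (Ioc a b))) :=
    Integrable.mul_prod ((comp_integrable hint j).mono_set Ioc_subset_Icc_self)
      (((hzc i).integrableOn_Icc).mono_set Ioc_subset_Icc_self)
  refine Integrable.bdd_mul (c := C) hbase hc.aestronglyMeasurable ?_
  rw [Measure.prod_restrict, ae_restrict_iff' (measurableSet_Ioc.prod measurableSet_Ioc)]
  exact Filter.Eventually.of_forall fun p hp =>
    hC p ⟨Ioc_subset_Icc_self hp.1, Ioc_subset_Icc_self hp.2⟩

lemma sec_eta {Gf : ℝ → ℝ → Matrix (Fin np) (Fin np) ℝ}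
    (hG : ∀ i j, Continuous fun p : ℝ × ℝ => Gf p.1 p.2 i j)
    (hzc : ∀ i, ContinuousOn (fun t => z t i) (Icc a b)) (v : Fin np → ℝ) (s : ℝ) :
    IntegrableOn (fun η => (Gf η s).mulVec v ⬝ᵥ z η) (Ioc a b) volume := by
  have hco : ContinuousOn (fun η => (Gf η s).mulVec v ⬝ᵥ z η) (Icc a b) := by
    have he : (fun η => (Gf η s).mulVec v ⬝ᵥ z η)
        = fun η => ∑ i, (∑ j, Gf η s i j * v j) * z η i := by
      funext η; simp [Matrix.mulVec, dotProduct]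
    rw [he]
    apply continuousOn_finset_sum; intro i _
    exact ((continuous_finset_sum _ fun j _ =>
      (cont_fst_of_cont (F := fun p q => Gf p q i j) (hG i j) s).mul
        continuous_const).continuousOn).mul (hzc i)
  exact hco.integrableOn_Icc.mono_set Ioc_subset_Icc_self

lemma sec_s {Gf : ℝ → ℝ → Matrix (Fin np) (Fin np) ℝ}
    (hG : ∀ i j, Continuous fun p : ℝ × ℝ => Gf p.1 p.2 i j)
    (hint : IntegrableOn zss (Icc a b) volume) (η : ℝ) (c : Fin np → ℝ) :
    IntegrableOn (fun s => (Gf η s).mulVec (zss s) ⬝ᵥ c) (Ioc a b) volume := by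
  have he : (fun s => (Gf η s).mulVec (zss s) ⬝ᵥ c)
      = fun s => ∑ i, (Gf η s).mulVec (zss s) i * c i := by
    funext s; simp [dotProduct]
  rw [he]
  apply integrable_finset_sum; intro i _
  exact (intOn_mulVec (c := a) (d := b) measurableSet_Ioc Ioc_subset_Icc_self
    (fun i j => cont_snd_of_cont (F := fun p q => Gf p q i j) (hG i j) η)
    (fun j => (comp_integrable hint j).mono_set Ioc_subset_Icc_self) i).mul_const (c i)

end Main2

end Aux

/-- For `z ∈ W^{2,2}` with `B_c z_b = 0` (and `B_c B_d` invertible)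
and any `x ∈ ℝ^{n₀}`, one has `|x|² + ‖z‖²_{L²} = ⟨(x,z_ss), 𝒯(x,z_ss)⟩_X`. -/
theorem norm_as_T_quadratic_form {n0 np : ℕ} (a b : ℝ) (hab : a < b)
    (Bc : Matrix (Fin 2 × Fin np) (Fin 4 × Fin np) ℝ)
    (hdet : IsUnit (Bc * Bdm a b np).det)
    (x : Fin n0 → ℝ) (z zs zss : ℝ → Fin np → ℝ)
    (hz : ∀ s ∈ Icc a b, HasDerivWithinAt z (zs s) (Icc a b) s)
    (hzs : ∀ s ∈ Icc a b, HasDerivWithinAt zs (zss s) (Icc a b) s)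
    (hzss : MemLp zss 2 (volume.restrict (Icc a b)))
    (hbc : Bc.mulVec (zbv a b z zs) = 0) :
    x ⬝ᵥ x + (∫ s in a..b, z s ⬝ᵥ z s)
      = innerX a b (x, zss) (Tapply a b Bc (x, zss)) := by
  have hab' : a ≤ b := hab.le
  haveI : IsFiniteMeasure (volume.restrict (Icc a b)) :=
    ⟨by rw [Measure.restrict_apply_univ]; exact measure_Icc_lt_top⟩
  have hint : IntegrableOn zss (Icc a b) volume := hzss.integrable one_le_two
  have hzc : ∀ i, ContinuousOn (fun t => z t i) (Icc a b) := by
    intro i t ht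
    exact ((hasDerivWithinAt_pi.mp (hz t ht)) i).continuousWithinAt
  -- the inner image equals z
  have hWz : ∀ η ∈ Icc a b,
      ((fun i => ∫ t in a..η, (G1m a b Bc η t).mulVec (zss t) i)
        + fun i => ∫ t in η..b, (G2m a b Bc η t).mulVec (zss t) i) = z η := by
    intro η hη
    funext i
    exact repr_z hab' hdet hz hzs hint hbc hη i
  rw [innerX]
  simp only [Tapply, Pop, Matrix.one_mulVec, Matrix.zero_mulVec, zero_add, add_zero,
    Pi.zero_apply, intervalIntegral.integral_zero, Pi.add_apply]
  have hx : ((x + fun _ => (0:ℝ)) + fun _ => (0:ℝ)) = x := by funext i; simp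
  rw [hx]
  congr 1
  -- left side: representation of ∫ z ⬝ z
  have key : (∫ s in a..b, z s ⬝ᵥ z s)
      = ∫ s in a..b, ((∫ η in a..s, (G1m a b Bc s η).mulVec (zss η) ⬝ᵥ z s)
          + ∫ η in s..b, (G2m a b Bc s η).mulVec (zss η) ⬝ᵥ z s) := by
    apply intervalIntegral.integral_congr
    intro s hs
    rw [uIcc_of_le hab'] at hs
    have h1 : ∀ i, IntervalIntegrable (fun η => (G1m a b Bc s η).mulVec (zss η) i) volume a s :=
      fun i => intInt_mulVec le_rfl hs.1 hs.2
        (fun i j => cont_snd_of_cont (F := fun p q => G1m a b Bc p q i j)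
          (cont_G1m a b Bc i j) s) hint i
    have h2 : ∀ i, IntervalIntegrable (fun η => (G2m a b Bc s η).mulVec (zss η) i) volume s b :=
      fun i => intInt_mulVec hs.1 hs.2 le_rfl
        (fun i j => cont_snd_of_cont (F := fun p q => G2m a b Bc p q i j)
          (cont_G2m a b Bc i j) s) hint i
    calc z s ⬝ᵥ z s
        = z s ⬝ᵥ ((fun i => ∫ t in a..s, (G1m a b Bc s t).mulVec (zss t) i)
            + fun i => ∫ t in s..b, (G2m a b Bc s t).mulVec (zss t) i) := by
          rw [hWz s hs]
      _ = (∫ η in a..s, z s ⬝ᵥ (G1m a b Bc s η).mulVec (zss η))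
            + ∫ η in s..b, z s ⬝ᵥ (G2m a b Bc s η).mulVec (zss η) := by
          rw [dotProduct_add, dot_intInt _ h1, dot_intInt _ h2]
      _ = (∫ η in a..s, (G1m a b Bc s η).mulVec (zss η) ⬝ᵥ z s)
            + ∫ η in s..b, (G2m a b Bc s η).mulVec (zss η) ⬝ᵥ z s := by
          congr 1 <;> exact intervalIntegral.integral_congr
            fun η _ => dotProduct_comm _ _
  rw [key]
  -- right side: rewrite the T-image
  have hTside : (∫ s in a..b, zss s ⬝ᵥ
        ((fun i => ∫ η in a..s, ((G2m a b Bc η s)ᵀ).mulVec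
            ((fun i => ∫ t in a..η, (G1m a b Bc η t).mulVec (zss t) i)
              + fun i => ∫ t in η..b, (G2m a b Bc η t).mulVec (zss t) i) i)
          + fun i => ∫ η in s..b, ((G1m a b Bc η s)ᵀ).mulVec
            ((fun i => ∫ t in a..η, (G1m a b Bc η t).mulVec (zss t) i)
              + fun i => ∫ t in η..b, (G2m a b Bc η t).mulVec (zss t) i) i))
      = ∫ s in a..b, ((∫ η in a..s, (G2m a b Bc η s).mulVec (zss s) ⬝ᵥ z η)
          + ∫ η in s..b, (G1m a b Bc η s).mulVec (zss s) ⬝ᵥ z η) := by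
    apply intervalIntegral.integral_congr
    intro s hs
    rw [uIcc_of_le hab'] at hs
    beta_reduce
    have hcT1 : ∀ i, IntervalIntegrable (fun η => ((G2m a b Bc η s)ᵀ).mulVec (z η) i)
        volume a s := by
      intro i
      apply ContinuousOn.intervalIntegrable_of_Icc hs.1
      have he : (fun η => ((G2m a b Bc η s)ᵀ).mulVec (z η) i)
          = fun η => ∑ j, G2m a b Bc η s j i * z η j := by
        funext η; simp [Matrix.mulVec, dotProduct, Matrix.transpose_apply]
      rw [he]
      apply continuousOn_finset_sum
      intro j _
      exact (((cont_fst_of_cont (F := fun p q => G2m a b Bc p q j i)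
        (cont_G2m a b Bc j i) s).continuousOn).mul (hzc j)).mono
          (Icc_subset_Icc_right hs.2)
    have hcT2 : ∀ i, IntervalIntegrable (fun η => ((G1m a b Bc η s)ᵀ).mulVec (z η) i)
        volume s b := by
      intro i
      apply ContinuousOn.intervalIntegrable_of_Icc hs.2
      have he : (fun η => ((G1m a b Bc η s)ᵀ).mulVec (z η) i)
          = fun η => ∑ j, G1m a b Bc η s j i * z η j := by
        funext η; simp [Matrix.mulVec, dotProduct, Matrix.transpose_apply]
      rw [he]
      apply continuousOn_finset_sum
      intro j _
      exact (((cont_fst_of_cont (F := fun p q => G1m a b Bc p q j i)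
        (cont_G1m a b Bc j i) s).continuousOn).mul (hzc j)).mono
          (Icc_subset_Icc_left hs.1)
    have hmon1 : (fun i => ∫ η in a..s, ((G2m a b Bc η s)ᵀ).mulVec
            ((fun i => ∫ t in a..η, (G1m a b Bc η t).mulVec (zss t) i)
              + fun i => ∫ t in η..b, (G2m a b Bc η t).mulVec (zss t) i) i)
        = fun i => ∫ η in a..s, ((G2m a b Bc η s)ᵀ).mulVec (z η) i := by
      funext i
      apply intervalIntegral.integral_congr
      intro η hη
      rw [uIcc_of_le hs.1] at hη
      exact congrArg (fun w => ((G2m a b Bc η s)ᵀ).mulVec w i)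
        (hWz η (Icc_subset_Icc_right hs.2 hη))
    have hmon2 : (fun i => ∫ η in s..b, ((G1m a b Bc η s)ᵀ).mulVec
            ((fun i => ∫ t in a..η, (G1m a b Bc η t).mulVec (zss t) i)
              + fun i => ∫ t in η..b, (G2m a b Bc η t).mulVec (zss t) i) i)
        = fun i => ∫ η in s..b, ((G1m a b Bc η s)ᵀ).mulVec (z η) i := by
      funext i
      apply intervalIntegral.integral_congr
      intro η hη
      rw [uIcc_of_le hs.2] at hη
      exact congrArg (fun w => ((G1m a b Bc η s)ᵀ).mulVec w i)
        (hWz η (Icc_subset_Icc_left hs.1 hη))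
    rw [hmon1, hmon2, dotProduct_add, dot_intInt _ hcT1, dot_intInt _ hcT2]
    congr 1 <;> exact intervalIntegral.integral_congr fun η _ => dot_trans _ _ _
  rw [hTside]
  -- Fubini on the triangle
  have swap := triangle_swap (a := a) (b := b) hab'
    (A := fun s η => (G2m a b Bc η s).mulVec (zss s) ⬝ᵥ z η)
    (B := fun s η => (G1m a b Bc η s).mulVec (zss s) ⬝ᵥ z η)
    (kernel_prod_integrable (cont_G2m a b Bc) hint hzc)
    (kernel_prod_integrable (cont_G1m a b Bc) hint hzc)
    (fun s _ => sec_eta (cont_G2m a b Bc) hzc (zss s) s)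
    (fun s _ => sec_eta (cont_G1m a b Bc) hzc (zss s) s)
    (fun η _ => sec_s (cont_G2m a b Bc) hint η (z η))
    (fun η _ => sec_s (cont_G1m a b Bc) hint η (z η))
  exact swap.symm


end
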